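/- For every integer n ≥ 1, the path P_n with n+1 vertices admits a fuzzy magic labeling; that is, there exist a real number m with 0 < m ≤ 1 and functions α : {1, …, n+1} → ℝ and β : {1, …, n} → ℝ such that all values α(1), …, α(n+1), β(1), …, β(n) lie in the half-open interval (0, 1], these 2n+1 values are pairwise distinct, β(j) < α(j) + α(j+1) for every 1 ≤ j ≤ n, and α(j) + β(j) + α(j+1) = m for every 1 ≤ j ≤ n. -/

import Mathlib

/-- For every integer `n ≥ 1`, the path `P_n` with `n+1` vertices `v_1, …, v_{n+1}` and
edges `e_j = v_j v_{j+1}` (`1 ≤ j ≤ n`) admits a fuzzy magic labeling: there exist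
`m ∈ (0,1]`, vertex labels `α` and edge labels `β` taking values in `(0,1]`, all `2n+1`
values pairwise distinct, with `β j < α j + α (j+1)` and `α j + β j + α (j+1) = m`
for every edge. -/
theorem path_is_fuzzy_magic (n : ℕ) (hn : 1 ≤ n) :
    ∃ (m : ℝ) (α β : ℕ → ℝ),
      0 < m ∧ m ≤ 1 ∧
      (∀ k, 1 ≤ k → k ≤ n + 1 → 0 < α k ∧ α k ≤ 1) ∧
      (∀ j, 1 ≤ j → j ≤ n → 0 < β j ∧ β j ≤ 1) ∧
      (∀ k k', 1 ≤ k → k ≤ n + 1 → 1 ≤ k' → k' ≤ n + 1 → k ≠ k' → α k ≠ α k') ∧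
      (∀ j j', 1 ≤ j → j ≤ n → 1 ≤ j' → j' ≤ n → j ≠ j' → β j ≠ β j') ∧
      (∀ k j, 1 ≤ k → k ≤ n + 1 → 1 ≤ j → j ≤ n → α k ≠ β j) ∧
      (∀ j, 1 ≤ j → j ≤ n → β j < α j + α (j + 1)) ∧
      (∀ j, 1 ≤ j → j ≤ n → α j + β j + α (j + 1) = m) := by
  set ε : ℝ := 1 / (8 * (n + 1)) with hεdef
  have hnp : (0:ℝ) < 8 * (n + 1) := by positivity
  have hε : 0 < ε := by positivity
  -- key bound: for k ≤ n+1, (k:ℝ) * ε ≤ 1/8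
  have hbound : ∀ k : ℕ, k ≤ n + 1 → (k : ℝ) * ε ≤ 1 / 8 := by
    intro k hk
    have hk' : (k : ℝ) ≤ (n : ℝ) + 1 := by exact_mod_cast hk
    have : (k : ℝ) * ε ≤ ((n : ℝ) + 1) * ε := by
      apply mul_le_mul_of_nonneg_right hk' hε.le
    calc (k : ℝ) * ε ≤ ((n : ℝ) + 1) * ε := this
      _ = 1 / 8 := by rw [hεdef]; field_simp
  refine ⟨1, fun k => 1 / 2 - (k : ℝ) * ε, fun j => (2 * (j : ℝ) + 1) * ε,
    one_pos, le_refl 1, ?_, ?_, ?_, ?_, ?_, ?_, ?_⟩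
  · intro k hk1 hk2
    have hb := hbound k hk2
    have hp : (0:ℝ) ≤ (k : ℝ) * ε := by positivity
    constructor <;> simp only <;> linarith
  · intro j hj1 hjn
    have hb := hbound (j + 1) (by omega)
    have hb' : (2 * (j : ℝ) + 1) * ε ≤ 2 * ((j : ℝ) + 1) * ε := by nlinarith
    have hcast : ((j + 1 : ℕ) : ℝ) = (j : ℝ) + 1 := by push_cast; ring
    rw [hcast] at hb
    constructor
    · positivity
    · simp only; nlinarith
  · intro k k' hk1 hk2 hk1' hk2' hne
    simp only
    intro h
    apply hne
    have : (k : ℝ) = (k' : ℝ) := by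
      have := mul_right_cancel₀ (ne_of_gt hε) (by linarith : (k : ℝ) * ε = (k' : ℝ) * ε)
      exact this
    exact_mod_cast this
  · intro j j' hj1 hj2 hj1' hj2' hne
    simp only
    intro h
    apply hne
    have h2 : (2 * (j : ℝ) + 1) = (2 * (j' : ℝ) + 1) :=
      mul_right_cancel₀ (ne_of_gt hε) h
    have : (j : ℝ) = (j' : ℝ) := by linarith
    exact_mod_cast this
  · intro k j hk1 hk2 hj1 hjn
    simp only
    intro h
    -- α k ≥ 1/2 - 1/8 = 3/8 ; β j ≤ (2n+1)ε < 2(n+1)ε = 1/4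
    have hαk := hbound k hk2
    have hb := hbound (n + 1) le_rfl
    have hcast : ((n + 1 : ℕ) : ℝ) = (n : ℝ) + 1 := by push_cast; ring
    rw [hcast] at hb
    have hjR : (j : ℝ) ≤ (n : ℝ) := by exact_mod_cast hjn
    have hβ : (2 * (j : ℝ) + 1) * ε ≤ 2 * ((n : ℝ) + 1) * ε := by nlinarith
    linarith
  · intro j hj1 hjn
    simp only
    have hjn' : j + 1 ≤ n + 1 := by omega
    have hb := hbound (j + 1) hjn'
    have hcast : ((j + 1 : ℕ) : ℝ) = (j : ℝ) + 1 := by push_cast; ring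
    rw [hcast] at hb
    have hbj := hbound j (by omega)
    push_cast
    nlinarith
  · intro j hj1 hjn
    simp only
    push_cast
    ring
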